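/- The adjusted Shapley inconsistency value satisfies Distribution: for every rule-based inconsistency measure I and rule base B, the sum over all α ∈ B of S*_α^I(B) equals I(B). -/

import Mathlib

open scoped Classical

/-- A rule over atoms `A`: literals are pairs (atom, sign). -/
structure Rule (A : Type*) where
  body : Finset (A × Bool)
  head : A × Bool
deriving DecidableEq

abbrev RuleBase (A : Type*) := Finset (Rule A)

variable {A : Type*}

/-- The complement of a literal. -/
def litCompl (l : A × Bool) : A × Bool := (l.1, !l.2)

/-- The fact with head `l` (empty body). -/
def factR (l : A × Bool) : Rule A := ⟨∅, l⟩

/-- The facts (empty-body rules) of a rule base. -/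
noncomputable def facts [DecidableEq A] (B : RuleBase A) : RuleBase A :=
  B.filter (fun r => r.body = ∅)

/-- The proper (non-fact) rules of a rule base. -/
noncomputable def properRules [DecidableEq A] (B : RuleBase A) : RuleBase A :=
  B.filter (fun r => r.body ≠ ∅)

/-- A set of literals is closed w.r.t. a rule base. -/
def Closed (B : RuleBase A) (M : Set (A × Bool)) : Prop :=
  ∀ r ∈ B, (↑r.body ⊆ M) → r.head ∈ M

/-- The minimal model: the smallest closed set of literals. -/
def minModel (B : RuleBase A) : Set (A × Bool) :=
  {l | ∀ M : Set (A × Bool), Closed B M → l ∈ M}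

/-- A set of literals is consistent if it contains no complementary pair. -/
def ConsistentLits (M : Set (A × Bool)) : Prop :=
  ¬ ∃ a : A, (a, true) ∈ M ∧ (a, false) ∈ M

/-- A rule base is consistent if its minimal model is consistent. -/
def Consistent (B : RuleBase A) : Prop := ConsistentLits (minModel B)

/-- The minimal inconsistent subsets of a rule base. -/
def MI (B : RuleBase A) : Set (RuleBase A) :=
  { M | M ⊆ B ∧ ¬ Consistent M ∧ ∀ M' ⊂ M, Consistent M' }

/-- `M` contains a complementary pair of facts. -/
def hasComplFactPair (M : RuleBase A) : Prop :=
  ∃ a : A, factR (a, true) ∈ M ∧ factR (a, false) ∈ M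

/-- Minimal inconsistent subsets containing no complementary pair of facts. -/
def MIF (B : RuleBase A) : Set (RuleBase A) :=
  { M ∈ MI B | ¬ hasComplFactPair M }

/-- A formula is free in a rule base if it belongs to no minimal inconsistent subset. -/
def Free (r : Rule A) (B : RuleBase A) : Prop := ∀ M ∈ MI B, r ∉ M

/-- Rule consistency: the rules together with any consistent set of facts are consistent. -/
def RuleConsistent [DecidableEq A] (B : RuleBase A) : Prop :=
  ∀ F' ⊆ facts B, Consistent F' → Consistent (properRules B ∪ F')

/-- The drastic inconsistency measure. -/
noncomputable def Idr (B : RuleBase A) : ℕ := if Consistent B then 0 else 1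

/-- The rule-based drastic inconsistency measure. -/
noncomputable def IRBd (B : RuleBase A) : ℕ := if MIF B = ∅ then 0 else 1

/-- The rule-based MI-inconsistency measure. -/
noncomputable def IRBMI (B : RuleBase A) : ℕ := (MIF B).ncard

/-- The rule-based problematic inconsistency measure: number of distinct
    non-fact rules occurring in some element of `MIF B`. -/
noncomputable def IRBp (B : RuleBase A) : ℕ :=
  {r : Rule A | r.body ≠ ∅ ∧ ∃ M ∈ MIF B, r ∈ M}.ncard

/-- Three truth values. -/
inductive TV | t | b | f
deriving DecidableEq

def TV.negv : TV → TV
  | .t => .f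
  | .f => .t
  | .b => .b

/-- Value of a literal under a three-valued interpretation. -/
def litVal (v : A → TV) (l : A × Bool) : TV :=
  if l.2 then v l.1 else (v l.1).negv

/-- Designated truth values. -/
def TV.des : TV → Prop
  | .f => False
  | _ => True

/-- Three-valued satisfaction of a rule. -/
def sat3 (v : A → TV) (r : Rule A) : Prop :=
  (∀ l ∈ r.body, (litVal v l).des) → (litVal v r.head).des

/-- The rule-based contension inconsistency measure. -/
noncomputable def IRBc (B : RuleBase A) : ℕ :=
  sInf { n : ℕ | ∃ v : A → TV,
    (∀ M ∈ MIF B, ∀ r ∈ M, sat3 v r) ∧ n = {a : A | v a = TV.b}.ncard }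

/-- The payoff of `α` in coalition `C` (w.r.t. rule base `B` and measure `I`). -/
noncomputable def CoalPayoff [DecidableEq A] (I : RuleBase A → ℝ) (B : RuleBase A)
    (α : Rule A) (C : RuleBase A) : ℝ :=
  ((Nat.factorial (C.card - 1) * Nat.factorial (B.card - C.card) : ℕ) : ℝ)
    / ((Nat.factorial B.card : ℕ) : ℝ) * (I C - I (C.erase α))

/-- The additional payoff shifted from facts to non-free rules. -/
noncomputable def AddPayoff [DecidableEq A] (I : RuleBase A → ℝ) (B : RuleBase A)
    (r : Rule A) (C : RuleBase A) : ℝ :=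
  if Free r C then 0
  else (∑ f ∈ C.filter (fun x => x.body = ∅), CoalPayoff I B f C)
        / ((C.filter (fun x => x.body ≠ ∅ ∧ ¬ Free x C)).card : ℝ)

/-- The adjusted Shapley inconsistency value. -/
noncomputable def Sstar [DecidableEq A] (I : RuleBase A → ℝ) (B : RuleBase A)
    (α : Rule A) : ℝ :=
  if α.body = ∅ then 0
  else ∑ C ∈ B.powerset, (CoalPayoff I B α C + AddPayoff I B α C)


section Aux
variable {A : Type*}

lemma minModel_mono {K K' : RuleBase A} (h : K ⊆ K') : minModel K ⊆ minModel K' := by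
  intro l hl M hM
  exact hl M (fun r hr => hM r (h hr))

lemma Consistent.mono' {K K' : RuleBase A} (h : K ⊆ K') (hc : Consistent K') :
    Consistent K := by
  rintro ⟨a, h1, h2⟩
  exact hc ⟨a, minModel_mono h h1, minModel_mono h h2⟩

lemma exists_mem_MI {K : RuleBase A} : ¬ Consistent K → ∃ M, M ∈ MI K := by
  induction K using Finset.strongInduction with
  | _ K ih =>
    intro h
    by_cases hall : ∀ M' ⊂ K, Consistent M'
    · exact ⟨K, Finset.Subset.refl K, h, hall⟩
    · push_neg at hall
      obtain ⟨K', hK', hK'c⟩ := hall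
      obtain ⟨M, hM1, hM2, hM3⟩ := ih K' hK' hK'c
      exact ⟨M, hM1.trans hK'.subset, hM2, hM3⟩

lemma free_of_not_mem {α : Rule A} {C : RuleBase A} (h : α ∉ C) : Free α C :=
  fun M hM hmem => h (hM.1 hmem)

lemma MI_mono {C C' : RuleBase A} (h : C' ⊆ C) : ∀ M ∈ MI C', M ∈ MI C :=
  fun M hM => ⟨hM.1.trans h, hM.2.1, hM.2.2⟩

lemma allFree_mono {C C' : RuleBase A} (h : C' ⊆ C)
    (hC : ∀ r ∈ C, r.body ≠ ∅ → Free r C) :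
    ∀ r ∈ C', r.body ≠ ∅ → Free r C' :=
  fun r hr hb M hM => hC r (h hr) hb M (MI_mono h M hM)

lemma ruleConsistent_of_allFree [DecidableEq A] {C : RuleBase A}
    (hC : ∀ r ∈ C, r.body ≠ ∅ → Free r C) : RuleConsistent C := by
  intro F' hF' hF'c
  by_contra hcon
  obtain ⟨M, hMsub, hMinc, hMmin⟩ := exists_mem_MI hcon
  have hMC : M ⊆ C := by
    intro r hr
    rcases Finset.mem_union.mp (hMsub hr) with h1 | h1
    · exact (Finset.mem_filter.mp h1).1
    · exact (Finset.mem_filter.mp (hF' h1)).1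
  have hMF' : M ⊆ F' := by
    intro r hr
    rcases Finset.mem_union.mp (hMsub hr) with h1 | h1
    · exact absurd hr (hC r (hMC hr) (Finset.mem_filter.mp h1).2 M ⟨hMC, hMinc, hMmin⟩)
    · exact h1
  exact hMinc (Consistent.mono' hMF' hF'c)

lemma I_zero_of_allFree [DecidableEq A] {I : RuleBase A → ℝ}
    (hRC : ∀ K : RuleBase A, I K = 0 ↔ RuleConsistent K)
    {C : RuleBase A} (hC : ∀ r ∈ C, r.body ≠ ∅ → Free r C) : I C = 0 :=
  (hRC C).mpr (ruleConsistent_of_allFree hC)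

lemma CoalPayoff_not_mem [DecidableEq A] (I : RuleBase A → ℝ) (B : RuleBase A)
    {α : Rule A} {C : RuleBase A} (h : α ∉ C) : CoalPayoff I B α C = 0 := by
  unfold CoalPayoff
  rw [Finset.erase_eq_of_notMem h, sub_self, mul_zero]

end Aux

section Shap

noncomputable def wfun (n c : ℕ) : ℝ :=
  ((Nat.factorial (c - 1) * Nat.factorial (n - c) : ℕ) : ℝ) / ((Nat.factorial n : ℕ) : ℝ)

lemma coef_lemma (n c : ℕ) (hc : c ≤ n) :
    (c : ℝ) * wfun n c - ((n - c : ℕ) : ℝ) * wfun n (c + 1)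
      = (if c = n then 1 else 0) - (if c = 0 then 1 else 0) := by
  have hn0 : ((Nat.factorial n : ℕ) : ℝ) ≠ 0 := Nat.cast_ne_zero.mpr (Nat.factorial_ne_zero n)
  rcases Nat.eq_zero_or_pos c with h0 | hcpos
  · subst h0
    rcases Nat.eq_zero_or_pos n with hn | hnpos
    · subst hn; simp [wfun]
    · have hne : ¬ ((0:ℕ) = n) := by omega
      simp only [wfun, hne, if_false, if_pos rfl, Nat.cast_zero, zero_mul, zero_sub,
        Nat.sub_zero, Nat.zero_sub, Nat.sub_self, Nat.factorial_zero, one_mul, zero_add, if_true]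
      rw [mul_div_assoc', neg_inj, div_eq_one_iff_eq hn0]
      exact_mod_cast Nat.mul_factorial_pred hnpos.ne'
  · rcases eq_or_lt_of_le hc with hce | hclt
    · subst hce
      have hne : ¬ (c = 0) := by omega
      simp only [wfun, hne, if_false, if_pos rfl, Nat.sub_self, Nat.cast_zero, zero_mul,
        sub_zero, Nat.factorial_zero, mul_one, if_true]
      rw [mul_div_assoc', div_eq_one_iff_eq hn0]
      exact_mod_cast Nat.mul_factorial_pred hcpos.ne'
    · have hne1 : ¬ (c = n) := by omega
      have hne2 : ¬ (c = 0) := by omega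
      have key : c * (Nat.factorial (c - 1) * Nat.factorial (n - c))
          = (n - c) * (Nat.factorial ((c + 1) - 1) * Nat.factorial (n - (c + 1))) := by
        have h1 : c * Nat.factorial (c - 1) = Nat.factorial c := Nat.mul_factorial_pred hcpos.ne'
        have h2 : (n - c) * Nat.factorial (n - c - 1) = Nat.factorial (n - c) :=
          Nat.mul_factorial_pred (by omega)
        have h3 : n - (c + 1) = n - c - 1 := by omega
        rw [h3, Nat.add_sub_cancel]
        calc c * (Nat.factorial (c - 1) * Nat.factorial (n - c))
            = (c * Nat.factorial (c - 1)) * Nat.factorial (n - c) := by ring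
          _ = Nat.factorial c * ((n - c) * Nat.factorial (n - c - 1)) := by rw [h1, h2]
          _ = (n - c) * (Nat.factorial c * Nat.factorial (n - c - 1)) := by ring
      simp only [wfun, hne1, hne2, if_false, sub_zero]
      rw [mul_div_assoc', mul_div_assoc', div_sub_div_same, div_eq_zero_iff]
      left
      rw [sub_eq_zero]
      exact_mod_cast key

lemma shapley_sum {R : Type*} [DecidableEq R] (v : Finset R → ℝ) (B : Finset R)
    (h0 : v ∅ = 0) :
    ∑ C ∈ B.powerset, ∑ α ∈ B, wfun B.card C.card * (v C - v (C.erase α)) = v B := by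
  set n := B.card with hn
  have step1 : ∀ C ∈ B.powerset,
      ∑ α ∈ B, wfun n C.card * (v C - v (C.erase α))
        = ∑ α ∈ C, wfun n C.card * (v C - v (C.erase α)) := by
    intro C hC
    refine (Finset.sum_subset (Finset.mem_powerset.mp hC) ?_).symm
    intro α _ hα
    rw [Finset.erase_eq_of_notMem hα, sub_self, mul_zero]
  rw [Finset.sum_congr rfl step1]
  have expand : ∀ C : Finset R,
      ∑ α ∈ C, wfun n C.card * (v C - v (C.erase α))
        = (C.card : ℝ) * wfun n C.card * v C
          - ∑ α ∈ C, wfun n C.card * v (C.erase α) := by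
    intro C
    simp only [mul_sub]
    rw [Finset.sum_sub_distrib, Finset.sum_const, nsmul_eq_mul]
    ring_nf
  rw [Finset.sum_congr rfl (fun C _ => expand C), Finset.sum_sub_distrib]
  have T2 : ∑ C ∈ B.powerset, ∑ α ∈ C, wfun n C.card * v (C.erase α)
      = ∑ D ∈ B.powerset, ((n - D.card : ℕ) : ℝ) * wfun n (D.card + 1) * v D := by
    have : ∑ C ∈ B.powerset, ∑ α ∈ C, wfun n C.card * v (C.erase α)
        = ∑ D ∈ B.powerset, ∑ α ∈ B \ D, wfun n (D.card + 1) * v D := by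
      rw [Finset.sum_sigma', Finset.sum_sigma']
      refine Finset.sum_nbij' (fun p => ⟨p.1.erase p.2, p.2⟩)
        (fun p => ⟨insert p.2 p.1, p.2⟩) ?_ ?_ ?_ ?_ ?_
      · rintro ⟨C, α⟩ hp
        simp only [Finset.mem_sigma, Finset.mem_powerset] at hp ⊢
        obtain ⟨hC, hα⟩ := hp
        refine ⟨(Finset.erase_subset α C).trans hC, ?_⟩
        simp [Finset.mem_sdiff, hC hα]
      · rintro ⟨D, α⟩ hp
        simp only [Finset.mem_sigma, Finset.mem_powerset, Finset.mem_sdiff] at hp ⊢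
        obtain ⟨hD, hα1, hα2⟩ := hp
        exact ⟨Finset.insert_subset hα1 hD, Finset.mem_insert_self _ _⟩
      · rintro ⟨C, α⟩ hp
        simp only [Finset.mem_sigma, Finset.mem_powerset] at hp
        simp [Finset.insert_erase hp.2]
      · rintro ⟨D, α⟩ hp
        simp only [Finset.mem_sigma, Finset.mem_powerset, Finset.mem_sdiff] at hp
        simp [Finset.erase_insert hp.2.2]
      · rintro ⟨C, α⟩ hp
        simp only [Finset.mem_sigma, Finset.mem_powerset] at hp
        have : (C.erase α).card + 1 = C.card := Finset.card_erase_add_one hp.2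
        simp [this]
    rw [this]
    refine Finset.sum_congr rfl ?_
    intro D hD
    rw [Finset.sum_const, nsmul_eq_mul, Finset.card_sdiff_of_subset (Finset.mem_powerset.mp hD)]
    ring
  rw [T2, ← Finset.sum_sub_distrib]
  have final : ∀ C ∈ B.powerset,
      (C.card : ℝ) * wfun n C.card * v C - ((n - C.card : ℕ) : ℝ) * wfun n (C.card + 1) * v C
        = (if C = B then v C else 0) - (if C = ∅ then v C else 0) := by
    intro C hC
    have hsub := Finset.mem_powerset.mp hC
    have hcle : C.card ≤ n := Finset.card_le_card hsub
    have := coef_lemma n C.card hcle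
    have heq : (C.card : ℝ) * wfun n C.card * v C
        - ((n - C.card : ℕ) : ℝ) * wfun n (C.card + 1) * v C
        = ((if C.card = n then (1:ℝ) else 0) - (if C.card = 0 then 1 else 0)) * v C := by
      rw [← this]; ring
    have h1 : (C.card = n) ↔ C = B := by
      constructor
      · intro h; exact Finset.eq_of_subset_of_card_le hsub (by omega)
      · intro h; subst h; rfl
    have h2 : (C.card = 0) ↔ C = ∅ := Finset.card_eq_zero
    rw [heq, if_congr h1 rfl rfl, if_congr h2 rfl rfl]
    by_cases hb : C = B <;> by_cases he : C = ∅ <;> simp [hb, he, sub_mul]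
  rw [Finset.sum_congr rfl final, Finset.sum_sub_distrib]
  rw [Finset.sum_ite_eq' B.powerset B v, Finset.sum_ite_eq' B.powerset ∅ v]
  simp [h0, Finset.empty_mem_powerset]

end Shap

section Main
variable {A : Type*}

theorem stmt12_aux [DecidableEq A] (I : RuleBase A → ℝ) (B : RuleBase A)
    (hRC : ∀ K : RuleBase A, I K = 0 ↔ RuleConsistent K) :
    ∑ α ∈ B, Sstar I B α = I B := by
  have hallfree_zero : ∀ C : RuleBase A, (∀ r ∈ C, r.body ≠ ∅ → Free r C) → I C = 0 :=
    fun C h => I_zero_of_allFree hRC h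
  have hI0 : I ∅ = 0 := hallfree_zero ∅ (by simp)
  have h1 : ∑ α ∈ B, Sstar I B α
      = ∑ α ∈ B.filter (fun r => r.body ≠ ∅),
          ∑ C ∈ B.powerset, (CoalPayoff I B α C + AddPayoff I B α C) := by
    rw [Finset.sum_filter]
    refine Finset.sum_congr rfl ?_
    intro α _
    by_cases h : α.body = ∅ <;> simp [Sstar, h]
  rw [h1, Finset.sum_comm]
  have h2 : ∀ C ∈ B.powerset,
      ∑ α ∈ B.filter (fun r => r.body ≠ ∅), (CoalPayoff I B α C + AddPayoff I B α C)
        = ∑ α ∈ B, CoalPayoff I B α C := by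
    intro C hC
    have hCB := Finset.mem_powerset.mp hC
    rw [Finset.sum_add_distrib]
    have hAP : ∑ α ∈ B.filter (fun r => r.body ≠ ∅), AddPayoff I B α C
        = ∑ f ∈ C.filter (fun x => x.body = ∅), CoalPayoff I B f C := by
      set T := C.filter (fun x => x.body ≠ ∅ ∧ ¬ Free x C) with hT
      set S := ∑ f ∈ C.filter (fun x => x.body = ∅), CoalPayoff I B f C with hS
      have hTsub : T ⊆ B.filter (fun r => r.body ≠ ∅) := by
        intro x hx
        rw [hT, Finset.mem_filter] at hx
        exact Finset.mem_filter.mpr ⟨hCB hx.1, hx.2.1⟩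
      have hrestrict : ∑ α ∈ B.filter (fun r => r.body ≠ ∅), AddPayoff I B α C
          = ∑ α ∈ T, AddPayoff I B α C := by
        refine (Finset.sum_subset hTsub ?_).symm
        intro α hα hαT
        rw [Finset.mem_filter] at hα
        have hfree : Free α C := by
          by_contra hf
          by_cases hmem : α ∈ C
          · exact hαT (by rw [hT]; exact Finset.mem_filter.mpr ⟨hmem, hα.2, hf⟩)
          · exact hf (free_of_not_mem hmem)
        simp [AddPayoff, hfree]
      rw [hrestrict]
      have hterm : ∀ α ∈ T, AddPayoff I B α C = S / (T.card : ℝ) := by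
        intro α hα
        rw [hT, Finset.mem_filter] at hα
        rw [AddPayoff, if_neg hα.2.2, hS, hT]
      rw [Finset.sum_congr rfl hterm, Finset.sum_const, nsmul_eq_mul]
      by_cases hk : T.card = 0
      · have hTe : T = ∅ := Finset.card_eq_zero.mp hk
        have hallfree : ∀ r ∈ C, r.body ≠ ∅ → Free r C := by
          intro r hr hb
          by_contra hf
          have hmem : r ∈ T := by rw [hT]; exact Finset.mem_filter.mpr ⟨hr, hb, hf⟩
          rw [hTe] at hmem
          exact absurd hmem (Finset.notMem_empty r)
        have hSz : S = 0 := by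
          rw [hS]
          refine Finset.sum_eq_zero ?_
          intro f hf
          have hIC : I C = 0 := hallfree_zero C hallfree
          have hICe : I (C.erase f) = 0 :=
            hallfree_zero _ (allFree_mono (Finset.erase_subset f C) hallfree)
          unfold CoalPayoff
          rw [hIC, hICe, sub_self, mul_zero]
        rw [hSz, hk]
        norm_num
      · rw [mul_comm, div_mul_cancel₀ _ (Nat.cast_ne_zero.mpr hk)]
    rw [hAP]
    rw [← Finset.sum_filter_add_sum_filter_not B (fun r => r.body ≠ ∅)
      (fun α => CoalPayoff I B α C)]
    congr 1
    refine Finset.sum_subset ?_ ?_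
    · intro x hx
      rw [Finset.mem_filter] at hx ⊢
      exact ⟨hCB hx.1, by simp [hx.2]⟩
    · intro x hx hxn
      rw [Finset.mem_filter] at hx hxn
      push_neg at hxn
      have hbody : x.body = ∅ := by
        by_contra hb
        exact hx.2 hb
      have hxC : x ∉ C := fun hc => (hxn hc).ne_empty hbody
      exact CoalPayoff_not_mem I B hxC
  rw [Finset.sum_congr rfl h2]
  exact shapley_sum I B hI0

end Main

theorem stmt12 [DecidableEq A] (I : RuleBase A → ℝ) (B : RuleBase A)
    (hRC : ∀ K : RuleBase A, I K = 0 ↔ RuleConsistent K)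
    (hMO : ∀ K K' : RuleBase A, K ⊆ K' → I K ≤ I K')
    (hIN : ∀ (K : RuleBase A) (α : Rule A), α ∈ K → Free α K → I K = I (K.erase α)) :
    ∑ α ∈ B, Sstar I B α = I B := stmt12_aux I B hRC
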